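/- arXiv:2111.00093 — 2 statements merged into one kernel-verified Lean document; each statement's English description precedes it below -/
import Mathlib

section
/- Every point of the segment {(s, s + 3/4) : s ∈ (0, 1/4)} and every point of the segment {(t, t + 1/4) : t ∈ (1/4, 1/2)} in 𝕋² is a fixed point of the map (V_0^2 ∘ H_0^2)². -/
/- 𝕋 = ℝ/ℤ, with d_𝕋 the quotient distance (norm of the difference in AddCircle 1). -/
noncomputable section

abbrev T1 := AddCircle (1 : ℝ)

/-- The distance d_𝕋(x,y) = min{|x−y|, 1−|x−y|} on 𝕋. -/
noncomputable def dT (x y : T1) : ℝ := ‖x - y‖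

/-- Horizontal wedge flow map H_ω^τ(x₁,x₂) = (x₁ + τ·d_𝕋(x₂,ω), x₂). -/
noncomputable def Hmap (ω : T1) (τ : ℝ) (p : T1 × T1) : T1 × T1 :=
  (p.1 + (↑(τ * dT p.2 ω) : T1), p.2)

/-- Vertical wedge flow map V_ω^τ(x₁,x₂) = (x₁, x₂ + τ·d_𝕋(x₁,ω)). -/
noncomputable def Vmap (ω : T1) (τ : ℝ) (p : T1 × T1) : T1 × T1 :=
  (p.1, p.2 + (↑(τ * dT p.1 ω) : T1))

lemma dT_coe (x : ℝ) : dT ((x : ℝ) : T1) 0 = |x - round x| := by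
  simp only [dT, sub_zero]
  exact UnitAddCircle.norm_eq

lemma coe_shift (a b : ℝ) (h : a = b + 1) : ((a : ℝ) : T1) = ((b : ℝ) : T1) := by
  rw [h]; exact AddCircle.coe_add_period 1 b

lemma rnd (x : ℝ) (n : ℤ) (h1 : (n : ℝ) ≤ x + 1/2) (h2 : x + 1/2 < n + 1) :
    round x = n := by
  rw [round_eq, Int.floor_eq_iff]
  · exact ⟨h1, h2⟩

lemma step (a b c d a' b' : ℝ) (hd1 : dT ((b : ℝ) : T1) 0 = c)
    (hd2 : dT ((a' : ℝ) : T1) 0 = d)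
    (h1 : ((a + 2*c : ℝ) : T1) = ((a' : ℝ) : T1))
    (h2 : ((b + 2*d : ℝ) : T1) = ((b' : ℝ) : T1)) :
    (Vmap 0 2 ∘ Hmap 0 2) (((a : ℝ) : T1), ((b : ℝ) : T1)) =
      (((a' : ℝ) : T1), ((b' : ℝ) : T1)) := by
  have key : ((a : ℝ) : T1) + ((2 * dT ((b:ℝ):T1) 0 : ℝ) : T1) = ((a + 2*c : ℝ) : T1) := by
    rw [hd1, ← AddCircle.coe_add]
  simp only [Function.comp_apply, Hmap, Vmap, key, h1, hd2, ← AddCircle.coe_add, h2]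

/-- every point of the segments {(s, s+3/4) : s ∈ (0,1/4)} and
{(t, t+1/4) : t ∈ (1/4,1/2)} is a fixed point of (V_0^2 ∘ H_0^2)². -/
theorem wedge_tau2_segments_fixed_by_square :
    (∀ s ∈ Set.Ioo (0 : ℝ) (1/4),
      (Vmap 0 2 ∘ Hmap 0 2)^[2] (((s : ℝ) : T1), ((s + 3/4 : ℝ) : T1)) =
        (((s : ℝ) : T1), ((s + 3/4 : ℝ) : T1))) ∧
    (∀ t ∈ Set.Ioo (1/4 : ℝ) (1/2),
      (Vmap 0 2 ∘ Hmap 0 2)^[2] (((t : ℝ) : T1), ((t + 1/4 : ℝ) : T1)) =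
        (((t : ℝ) : T1), ((t + 1/4 : ℝ) : T1))) := by
  constructor
  · rintro s ⟨h0, h1⟩
    have e1 := step s (s + 3/4) (1/4 - s) (1/2 - s) (1/2 - s) (3/4 - s)
      (by rw [dT_coe, rnd _ 1 (by push_cast; linarith) (by push_cast; linarith),
            abs_of_nonpos (by push_cast; linarith)]; push_cast; ring)
      (by rw [dT_coe, rnd _ 0 (by push_cast; linarith) (by push_cast; linarith),
            abs_of_nonneg (by push_cast; linarith)]; push_cast; ring)
      (by congr 1; ring)
      (coe_shift _ _ (by ring))
    have e2 := step (1/2 - s) (3/4 - s) (1/4 + s) s s (s + 3/4)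
      (by rw [dT_coe, rnd _ 1 (by push_cast; linarith) (by push_cast; linarith),
            abs_of_nonpos (by push_cast; linarith)]; push_cast; ring)
      (by rw [dT_coe, rnd _ 0 (by push_cast; linarith) (by push_cast; linarith),
            abs_of_nonneg (by push_cast; linarith)]; push_cast; ring)
      (coe_shift _ _ (by ring))
      (by congr 1; ring)
    show (Vmap 0 2 ∘ Hmap 0 2) ((Vmap 0 2 ∘ Hmap 0 2) _) = _
    rw [e1, e2]
  · rintro t ⟨h0, h1⟩
    have e1 := step t (t + 1/4) (3/4 - t) (1/2 - t) (1/2 - t) (5/4 - t)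
      (by rw [dT_coe, rnd _ 1 (by push_cast; linarith) (by push_cast; linarith),
            abs_of_nonpos (by push_cast; linarith)]; push_cast; ring)
      (by rw [dT_coe, rnd _ 0 (by push_cast; linarith) (by push_cast; linarith),
            abs_of_nonneg (by push_cast; linarith)]; push_cast; ring)
      (coe_shift _ _ (by ring))
      (by congr 1; ring)
    have e2 := step (1/2 - t) (5/4 - t) (t - 1/4) t t (t + 1/4)
      (by rw [dT_coe, rnd _ 1 (by push_cast; linarith) (by push_cast; linarith),
            abs_of_nonpos (by push_cast; linarith)]; push_cast; ring)
      (by rw [dT_coe, rnd _ 0 (by push_cast; linarith) (by push_cast; linarith),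
            abs_of_nonneg (by push_cast; linarith)]; push_cast; ring)
      (by congr 1; ring)
      (coe_shift _ _ (by ring))
    show (Vmap 0 2 ∘ Hmap 0 2) ((Vmap 0 2 ∘ Hmap 0 2) _) = _
    rw [e1, e2]
end
end

section
/- For every s ∈ (0, 1/4) there exists δ > 0 such that for all (a,b) ∈ ℝ² with a² + b² < δ², one has (V_0^2 ∘ H_0^2)²(s + a, s + 3/4 + b) = (s − 3a + 4b, s + 3/4 − 4a + 5b) (all coordinates taken modulo 1); that is, (V_0^2 ∘ H_0^2)² fixes each point (s, s + 3/4) and is locally affine there, with linear part given by the matrix [[−3, 4], [−4, 5]]. -/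
/- 𝕋 = ℝ/ℤ, with d_𝕋 the quotient distance (norm of the difference in AddCircle 1). -/
noncomputable section

lemma T1_norm_eq_abs {x : ℝ} (hx : |x| ≤ 1/2) : ‖(x : T1)‖ = |x| :=
  (AddCircle.norm_coe_eq_abs_iff (1 : ℝ) one_ne_zero).2 (by rw [abs_one]; linarith)

lemma T1_shift (x : ℝ) : ((x + 1 : ℝ) : T1) = ((x : ℝ) : T1) :=
  AddCircle.coe_add_period 1 x

/-- (V_0^2 ∘ H_0^2)² fixes each point (s, s+3/4) with s ∈ (0,1/4) and is
locally affine there, with linear part [[−3, 4], [−4, 5]]. -/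
theorem wedge_tau2_square_locally_affine (s : ℝ) (hs : s ∈ Set.Ioo (0 : ℝ) (1/4)) :
    ∃ δ > 0, ∀ a b : ℝ, a ^ 2 + b ^ 2 < δ ^ 2 →
      (Vmap 0 2 ∘ Hmap 0 2)^[2] (((s + a : ℝ) : T1), ((s + 3/4 + b : ℝ) : T1)) =
        (((s - 3*a + 4*b : ℝ) : T1), ((s + 3/4 - 4*a + 5*b : ℝ) : T1)) := by
  obtain ⟨hs0, hs4⟩ := hs
  set δ : ℝ := min s (1/4 - s) / 10 with hδdef
  have hδpos : 0 < δ := by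
    have : 0 < min s (1/4 - s) := lt_min hs0 (by linarith)
    positivity
  refine ⟨δ, hδpos, ?_⟩
  intro a b hab
  have ha : |a| < δ := by nlinarith [sq_abs a, sq_abs b, sq_nonneg b, abs_nonneg a]
  have hb : |b| < δ := by nlinarith [sq_abs a, sq_abs b, sq_nonneg a, abs_nonneg b]
  have hδs : δ ≤ s / 10 := by
    rw [hδdef]; gcongr; exact min_le_left _ _
  have hδs' : δ ≤ (1/4 - s) / 10 := by
    rw [hδdef]; gcongr; exact min_le_right _ _
  have ha' := abs_lt.1 ha
  have hb' := abs_lt.1 hb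
  -- norm computations
  have n1 : ‖((s + 3/4 + b : ℝ) : T1)‖ = 1/4 - s - b := by
    rw [show (s + 3/4 + b : ℝ) = (s - 1/4 + b) + 1 by ring, T1_shift,
      T1_norm_eq_abs (by rw [abs_le]; constructor <;> linarith),
      abs_of_nonpos (by linarith)]
    ring
  have n2 : ‖((1/2 - s + a - 2*b : ℝ) : T1)‖ = 1/2 - s + a - 2*b := by
    rw [T1_norm_eq_abs (by rw [abs_le]; constructor <;> linarith),
      abs_of_nonneg (by linarith)]
  have n3 : ‖((7/4 - s + 2*a - 3*b : ℝ) : T1)‖ = 1/4 + s - 2*a + 3*b := by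
    rw [show (7/4 - s + 2*a - 3*b : ℝ) = ((-1/4 - s + 2*a - 3*b) + 1) + 1 by ring,
      T1_shift, T1_shift,
      T1_norm_eq_abs (by rw [abs_le]; constructor <;> linarith),
      abs_of_nonpos (by linarith)]
    ring
  have n4 : ‖((1 + s - 3*a + 4*b : ℝ) : T1)‖ = s - 3*a + 4*b := by
    rw [show (1 + s - 3*a + 4*b : ℝ) = (s - 3*a + 4*b) + 1 by ring, T1_shift,
      T1_norm_eq_abs (by rw [abs_le]; constructor <;> linarith),
      abs_of_nonneg (by linarith)]
  -- step computations
  have h1 : Hmap 0 2 (((s + a : ℝ) : T1), ((s + 3/4 + b : ℝ) : T1))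
      = (((1/2 - s + a - 2*b : ℝ) : T1), ((s + 3/4 + b : ℝ) : T1)) := by
    simp only [Hmap, dT, sub_zero, n1, ← AddCircle.coe_add]
    congr 1
    congr 1
    ring
  have h2 : Vmap 0 2 (((1/2 - s + a - 2*b : ℝ) : T1), ((s + 3/4 + b : ℝ) : T1))
      = (((1/2 - s + a - 2*b : ℝ) : T1), ((7/4 - s + 2*a - 3*b : ℝ) : T1)) := by
    simp only [Vmap, dT, sub_zero, n2, ← AddCircle.coe_add]
    congr 2
    ring
  have h3 : Hmap 0 2 (((1/2 - s + a - 2*b : ℝ) : T1), ((7/4 - s + 2*a - 3*b : ℝ) : T1))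
      = (((1 + s - 3*a + 4*b : ℝ) : T1), ((7/4 - s + 2*a - 3*b : ℝ) : T1)) := by
    simp only [Hmap, dT, sub_zero, n3, ← AddCircle.coe_add]
    congr 1
    congr 1
    ring
  have h4 : Vmap 0 2 (((1 + s - 3*a + 4*b : ℝ) : T1), ((7/4 - s + 2*a - 3*b : ℝ) : T1))
      = (((1 + s - 3*a + 4*b : ℝ) : T1), ((7/4 + s - 4*a + 5*b : ℝ) : T1)) := by
    simp only [Vmap, dT, sub_zero, n4, ← AddCircle.coe_add]
    congr 2
    ring
  have final1 : ((1 + s - 3*a + 4*b : ℝ) : T1) = ((s - 3*a + 4*b : ℝ) : T1) := by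
    rw [show (1 + s - 3*a + 4*b : ℝ) = (s - 3*a + 4*b) + 1 by ring, T1_shift]
  have final2 : ((7/4 + s - 4*a + 5*b : ℝ) : T1) = ((s + 3/4 - 4*a + 5*b : ℝ) : T1) := by
    rw [show (7/4 + s - 4*a + 5*b : ℝ) = (s + 3/4 - 4*a + 5*b) + 1 by ring, T1_shift]
  show (Vmap 0 2 ∘ Hmap 0 2) ((Vmap 0 2 ∘ Hmap 0 2) ((Vmap 0 2 ∘ Hmap 0 2)^[0] _)) = _
  simp only [Function.iterate_zero, id_eq, Function.comp_apply]
  rw [h1, h2, h3, h4, final1, final2]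
end
end
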